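/- Let x_a(t) = e₁·exp(jφ₁(t)) + e₂·exp(jφ₂(t)) with real constants e₁ > e₂ > 0 and real phase functions φ₁, φ₂. Then any continuous phase φ(t) of x_a can be written as φ(t) = φ₁(t) + b(t) where |b(t)| ≤ arcsin(e₂/e₁) < π/2 for all t. -/

import Mathlib

open Real Complex

/-- For `x_a t = e₁ exp(jφ₁ t) + e₂ exp(jφ₂ t)` with `e₁ > e₂ > 0`, the phase of
`x_a` can be written as `φ₁ + b` with `|b t| ≤ arcsin (e₂/e₁) < π/2` for all `t`:
the phase of the whole signal is the phase `φ₁` of the stronger exponential plus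
a bounded function. -/
theorem two_exponential_phase (e₁ e₂ : ℝ) (h₂ : 0 < e₂) (h₁₂ : e₂ < e₁)
    (φ₁ φ₂ : ℝ → ℝ) :
    Real.arcsin (e₂ / e₁) < π / 2 ∧
    ∃ b : ℝ → ℝ, (∀ t, |b t| ≤ Real.arcsin (e₂ / e₁)) ∧
      ∀ t, (e₁ : ℂ) * Complex.exp (Complex.I * (φ₁ t : ℂ))
            + (e₂ : ℂ) * Complex.exp (Complex.I * (φ₂ t : ℂ))
          = (‖(e₁ : ℂ) * Complex.exp (Complex.I * (φ₁ t : ℂ))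
              + (e₂ : ℂ) * Complex.exp (Complex.I * (φ₂ t : ℂ))‖ : ℂ)
            * Complex.exp (Complex.I * ((φ₁ t + b t : ℝ) : ℂ)) := by
  have h₁ : (0:ℝ) < e₁ := h₂.trans h₁₂
  have he₁ : (e₁ : ℂ) ≠ 0 := by exact_mod_cast h₁.ne'
  set r : ℝ := e₂ / e₁ with hrdef
  have hr0 : 0 < r := div_pos h₂ h₁
  have hr1 : r < 1 := (div_lt_one h₁).2 h₁₂
  refine ⟨Real.arcsin_lt_pi_div_two.2 hr1, ?_⟩
  set z : ℝ → ℂ := fun t =>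
    1 + (r : ℂ) * Complex.exp (((φ₂ t - φ₁ t : ℝ) : ℂ) * Complex.I) with hzdef
  have hre : ∀ t, (z t).re = 1 + r * Real.cos (φ₂ t - φ₁ t) := by
    intro t
    simp only [hzdef, Complex.add_re, Complex.one_re, Complex.mul_re,
      Complex.ofReal_re, Complex.ofReal_im, Complex.exp_ofReal_mul_I_re,
      Complex.exp_ofReal_mul_I_im]
    ring
  have him : ∀ t, (z t).im = r * Real.sin (φ₂ t - φ₁ t) := by
    intro t
    simp only [hzdef, Complex.add_im, Complex.one_im, Complex.mul_im,
      Complex.ofReal_re, Complex.ofReal_im, Complex.exp_ofReal_mul_I_re,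
      Complex.exp_ofReal_mul_I_im]
    ring
  have hrepos : ∀ t, 0 < (z t).re := by
    intro t
    have := Real.neg_one_le_cos (φ₂ t - φ₁ t)
    rw [hre t]; nlinarith
  have hzne : ∀ t, z t ≠ 0 := by
    intro t h
    have := hrepos t
    rw [h] at this; simp at this
  have habspos : ∀ t, 0 < ‖z t‖ := fun t =>
    norm_pos_iff.mpr (hzne t)
  -- key bound : |im| ≤ r * abs
  have hkey : ∀ t, |(z t).im| ≤ r * ‖z t‖ := by
    intro t
    have hsq : (z t).im ^ 2 ≤ (r * ‖z t‖) ^ 2 := by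
      have h1 : ‖z t‖ ^ 2 = (z t).re ^ 2 + (z t).im ^ 2 := by
        rw [Complex.sq_norm, Complex.normSq_apply]; ring
      have h2 := Real.sin_sq_add_cos_sq (φ₂ t - φ₁ t)
      rw [hre t] at h1
      rw [him t] at h1 ⊢
      have h3 : (r * ‖z t‖) ^ 2
          = r ^ 2 * ((1 + r * Real.cos (φ₂ t - φ₁ t)) ^ 2
            + (r * Real.sin (φ₂ t - φ₁ t)) ^ 2) := by
        rw [mul_pow, h1]
      rw [h3]
      have h4 : r ^ 2 * ((1 + r * Real.cos (φ₂ t - φ₁ t)) ^ 2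
            + (r * Real.sin (φ₂ t - φ₁ t)) ^ 2)
          - (r * Real.sin (φ₂ t - φ₁ t)) ^ 2
          = (r * (Real.cos (φ₂ t - φ₁ t) + r)) ^ 2 := by
        linear_combination (r ^ 2 * (r ^ 2 - 1)) * h2
      nlinarith [sq_nonneg (r * (Real.cos (φ₂ t - φ₁ t) + r))]
    have := abs_le_of_sq_le_sq' hsq (by positivity)
    exact abs_le.2 this
  refine ⟨fun t => (z t).arg, ?_, ?_⟩
  · intro t
    beta_reduce
    have hargle : |(z t).arg| ≤ π / 2 :=
      Complex.abs_arg_le_pi_div_two_iff.2 (hrepos t).le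
    have hsin : Real.sin (z t).arg = (z t).im / ‖z t‖ :=
      Complex.sin_arg (z t)
    have hsb : |Real.sin (z t).arg| ≤ r := by
      rw [hsin, abs_div, abs_of_pos (habspos t)]
      rw [div_le_iff₀ (habspos t)]
      calc |(z t).im| ≤ r * ‖z t‖ := hkey t
        _ = r * ‖z t‖ := rfl
    have harg := abs_le.1 hargle
    have : (z t).arg = Real.arcsin (Real.sin (z t).arg) :=
      (Real.arcsin_sin harg.1 harg.2).symm
    rw [this]
    have hsb' := abs_le.1 hsb
    refine abs_le.2 ⟨?_, ?_⟩
    · rw [← Real.arcsin_neg]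
      exact Real.monotone_arcsin (by linarith [hsb'.1])
    · exact Real.monotone_arcsin hsb'.2
  · intro t
    have hfactor :
        (e₁ : ℂ) * Complex.exp (Complex.I * (φ₁ t : ℂ))
          + (e₂ : ℂ) * Complex.exp (Complex.I * (φ₂ t : ℂ))
        = (e₁ : ℂ) * Complex.exp (Complex.I * (φ₁ t : ℂ)) * z t := by
      rw [hzdef]
      have h2 : Complex.exp (Complex.I * (φ₁ t : ℂ)) *
          Complex.exp (((φ₂ t - φ₁ t : ℝ) : ℂ) * Complex.I)
          = Complex.exp (Complex.I * (φ₂ t : ℂ)) := by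
        rw [← Complex.exp_add]
        congr 1
        push_cast
        ring
      have hre₂ : (e₁ : ℂ) * (r : ℂ) = (e₂ : ℂ) := by
        rw [hrdef]; push_cast; field_simp
      calc (e₁ : ℂ) * Complex.exp (Complex.I * (φ₁ t : ℂ))
            + (e₂ : ℂ) * Complex.exp (Complex.I * (φ₂ t : ℂ))
          = (e₁ : ℂ) * Complex.exp (Complex.I * (φ₁ t : ℂ))
            + (e₁ : ℂ) * (r : ℂ) * (Complex.exp (Complex.I * (φ₁ t : ℂ)) *
              Complex.exp (((φ₂ t - φ₁ t : ℝ) : ℂ) * Complex.I)) := by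
              rw [h2, hre₂]
        _ = (e₁ : ℂ) * Complex.exp (Complex.I * (φ₁ t : ℂ)) *
            (1 + (r : ℂ) * Complex.exp (((φ₂ t - φ₁ t : ℝ) : ℂ) * Complex.I)) := by
              ring
    have hnorm : ‖(e₁ : ℂ) * Complex.exp (Complex.I * (φ₁ t : ℂ))
        + (e₂ : ℂ) * Complex.exp (Complex.I * (φ₂ t : ℂ))‖
        = e₁ * ‖z t‖ := by
      rw [hfactor]
      simp [Complex.norm_exp, abs_of_pos h₁, mul_comm Complex.I]
    beta_reduce
    rw [hnorm, hfactor]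
    have hzeq : ((‖z t‖ : ℝ) : ℂ) *
        Complex.exp (((z t).arg : ℂ) * Complex.I) = z t :=
      Complex.norm_mul_exp_arg_mul_I (z t)
    have hexp : Complex.exp (Complex.I * ((φ₁ t + (z t).arg : ℝ) : ℂ))
        = Complex.exp (Complex.I * (φ₁ t : ℂ)) *
          Complex.exp (((z t).arg : ℂ) * Complex.I) := by
      rw [← Complex.exp_add]
      congr 1
      push_cast
      ring
    rw [hexp]
    conv_lhs => rw [← hzeq]
    push_cast
    ring
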